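/- If S is an entire, cancellative, zerosumfree semiring (which is not necessarily a ring), then the only injective left S-semimodule is the zero semimodule. In particular, a divisible element argument: if I is an S-injective left S-semimodule and s ∈ S is not a zero divisor, then for every x ∈ I there exists y ∈ I with s·y = x. -/
import Mathlib

open Classical in
/-- Scalar action of `S` on `WithTop I`: `s • ⊤ = ⊤` for `s ≠ 0`, `0 • m = 0`. -/
noncomputable def stmt12tsmul {S I : Type} [Semiring S] [AddCommMonoid I] [Module S I]
    (s : S) (m : WithTop I) : WithTop I :=
  if s = 0 then 0 else m.map (s • ·)

section Aux

variable {S I : Type} [Semiring S] [AddCommMonoid I] [Module S I]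

lemma stmt12tsmul_coe (s : S) (x : I) :
    stmt12tsmul s (x : WithTop I) = ((s • x : I) : WithTop I) := by
  by_cases hs : s = 0
  · simp [stmt12tsmul, hs]
  · simp [stmt12tsmul, hs]

lemma stmt12tsmul_top {s : S} (hs : s ≠ 0) :
    stmt12tsmul s (⊤ : WithTop I) = ⊤ := by
  simp [stmt12tsmul, hs, WithTop.map_top]

lemma stmt12tsmul_zero (m : WithTop I) : stmt12tsmul (0 : S) m = 0 := by
  simp [stmt12tsmul]

/-- The module structure on `WithTop I`. -/
noncomputable def stmt12Module (hnt : (0 : S) ≠ 1)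
    (hentire : ∀ a b : S, a * b = 0 → a = 0 ∨ b = 0)
    (hzsf : ∀ a b : S, a + b = 0 → a = 0 ∧ b = 0) :
    Module S (WithTop I) where
  smul := stmt12tsmul
  one_smul m := by
    show stmt12tsmul 1 m = m
    induction m using WithTop.recTopCoe with
    | top => exact stmt12tsmul_top (fun h => hnt h.symm)
    | coe x => rw [stmt12tsmul_coe, one_smul]
  mul_smul s t m := by
    show stmt12tsmul (s * t) m = stmt12tsmul s (stmt12tsmul t m)
    induction m using WithTop.recTopCoe with
    | top =>
      by_cases ht : t = 0
      · subst ht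
        rw [mul_zero, stmt12tsmul_zero]
        show (0 : WithTop I) = stmt12tsmul s (((0 : I) : WithTop I))
        rw [stmt12tsmul_coe, smul_zero]
        rfl
      · rw [stmt12tsmul_top ht]
        by_cases hs : s = 0
        · subst hs
          rw [zero_mul, stmt12tsmul_zero]
        · have hst : s * t ≠ 0 := fun h => by
            rcases hentire s t h with h | h
            · exact hs h
            · exact ht h
          rw [stmt12tsmul_top hst, stmt12tsmul_top hs]
    | coe x => rw [stmt12tsmul_coe, stmt12tsmul_coe, stmt12tsmul_coe, mul_smul]
  smul_zero s := by
    show stmt12tsmul s 0 = 0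
    have : (0 : WithTop I) = ((0 : I) : WithTop I) := rfl
    rw [this, stmt12tsmul_coe, smul_zero]
  smul_add s m n := by
    show stmt12tsmul s (m + n) = stmt12tsmul s m + stmt12tsmul s n
    by_cases hs : s = 0
    · subst hs
      rw [stmt12tsmul_zero, stmt12tsmul_zero, stmt12tsmul_zero, add_zero]
    · induction m using WithTop.recTopCoe with
      | top => rw [WithTop.top_add, stmt12tsmul_top hs, WithTop.top_add]
      | coe x =>
        induction n using WithTop.recTopCoe with
        | top => rw [WithTop.add_top, stmt12tsmul_top hs, WithTop.add_top]
        | coe y =>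
          rw [← WithTop.coe_add, stmt12tsmul_coe, stmt12tsmul_coe, stmt12tsmul_coe,
            ← WithTop.coe_add, smul_add]
  add_smul s t m := by
    show stmt12tsmul (s + t) m = stmt12tsmul s m + stmt12tsmul t m
    induction m using WithTop.recTopCoe with
    | top =>
      by_cases hs : s = 0
      · subst hs
        rw [zero_add, stmt12tsmul_zero, zero_add]
      · have hst : s + t ≠ 0 := fun h => hs (hzsf s t h).1
        rw [stmt12tsmul_top hs, stmt12tsmul_top hst, WithTop.top_add]
    | coe x =>
      rw [stmt12tsmul_coe, stmt12tsmul_coe, stmt12tsmul_coe, add_smul, WithTop.coe_add]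
  zero_smul m := stmt12tsmul_zero m

end Aux

section Diff

variable {S : Type} [Semiring S]

/-- The "difference" congruence on `S × S`. -/
def stmt12Con (hcanc : ∀ a b c : S, a + b = a + c → b = c) : AddCon (S × S) where
  r p q := p.1 + q.2 = q.1 + p.2
  iseqv := by
    refine ⟨fun p => rfl, fun h => h.symm, ?_⟩
    intro p q r h1 h2
    apply hcanc (q.1 + q.2)
    calc (q.1 + q.2) + (p.1 + r.2) = (p.1 + q.2) + (q.1 + r.2) := by abel
      _ = (q.1 + p.2) + (r.1 + q.2) := by rw [h1, h2]
      _ = (q.1 + q.2) + (r.1 + p.2) := by abel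
  add' := by
    intro a b c d h1 h2
    show (a.1 + c.1) + (b.2 + d.2) = (b.1 + d.1) + (a.2 + c.2)
    calc (a.1 + c.1) + (b.2 + d.2) = (a.1 + b.2) + (c.1 + d.2) := by abel
      _ = (b.1 + a.2) + (d.1 + c.2) := by rw [h1, h2]
      _ = (b.1 + d.1) + (a.2 + c.2) := by abel

variable (hcanc : ∀ a b c : S, a + b = a + c → b = c)

/-- The module of differences. -/
def stmt12Diff : Type := (stmt12Con hcanc).Quotient

instance : AddCommMonoid (stmt12Diff hcanc) :=
  inferInstanceAs (AddCommMonoid (stmt12Con hcanc).Quotient)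

/-- class of a pair. -/
def stmt12mk (p : S × S) : stmt12Diff hcanc := (p : (stmt12Con hcanc).Quotient)

lemma stmt12mk_add (p q : S × S) :
    stmt12mk hcanc (p + q) = stmt12mk hcanc p + stmt12mk hcanc q := rfl

lemma stmt12mk_eq {p q : S × S} (h : p.1 + q.2 = q.1 + p.2) :
    stmt12mk hcanc p = stmt12mk hcanc q := Quotient.sound' h

lemma stmt12mk_eq_iff {p q : S × S} :
    stmt12mk hcanc p = stmt12mk hcanc q ↔ p.1 + q.2 = q.1 + p.2 := by
  constructor
  · intro h
    exact Quotient.exact' h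
  · exact stmt12mk_eq hcanc

lemma stmt12mk_zero : stmt12mk hcanc (0, 0) = 0 := rfl

/-- scalar multiplication on the module of differences. -/
def stmt12dsmul (s : S) : stmt12Diff hcanc → stmt12Diff hcanc :=
  Quotient.map' (fun p => (s * p.1, s * p.2)) (by
    intro p q h
    show s * p.1 + s * q.2 = s * q.1 + s * p.2
    rw [← mul_add, ← mul_add, h])

lemma stmt12dsmul_mk (s : S) (p : S × S) :
    stmt12dsmul hcanc s (stmt12mk hcanc p) = stmt12mk hcanc (s * p.1, s * p.2) := rfl

/-- Module structure on the module of differences. -/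
def stmt12DiffModule : Module S (stmt12Diff hcanc) where
  smul := stmt12dsmul hcanc
  one_smul m := by
    induction m using Quotient.inductionOn' with
    | h p =>
      show stmt12dsmul hcanc 1 (stmt12mk hcanc p) = stmt12mk hcanc p
      rw [stmt12dsmul_mk, one_mul, one_mul]
  mul_smul s t m := by
    induction m using Quotient.inductionOn' with
    | h p =>
      show stmt12dsmul hcanc (s * t) (stmt12mk hcanc p)
        = stmt12dsmul hcanc s (stmt12dsmul hcanc t (stmt12mk hcanc p))
      rw [stmt12dsmul_mk, stmt12dsmul_mk, stmt12dsmul_mk, mul_assoc, mul_assoc]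
  smul_zero s := by
    show stmt12dsmul hcanc s (stmt12mk hcanc (0, 0)) = 0
    rw [stmt12dsmul_mk, mul_zero]
    exact stmt12mk_zero hcanc
  smul_add s m n := by
    induction m using Quotient.inductionOn' with
    | h p =>
      induction n using Quotient.inductionOn' with
      | h q =>
        show stmt12dsmul hcanc s (stmt12mk hcanc p + stmt12mk hcanc q)
          = stmt12dsmul hcanc s (stmt12mk hcanc p) + stmt12dsmul hcanc s (stmt12mk hcanc q)
        rw [← stmt12mk_add, stmt12dsmul_mk, stmt12dsmul_mk, stmt12dsmul_mk, ← stmt12mk_add]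
        apply stmt12mk_eq
        show s * (p + q).1 + (s * p.2 + s * q.2) = (s * p.1 + s * q.1) + s * (p + q).2
        simp only [Prod.fst_add, Prod.snd_add, mul_add]
  add_smul s t m := by
    induction m using Quotient.inductionOn' with
    | h p =>
      show stmt12dsmul hcanc (s + t) (stmt12mk hcanc p)
        = stmt12dsmul hcanc s (stmt12mk hcanc p) + stmt12dsmul hcanc t (stmt12mk hcanc p)
      rw [stmt12dsmul_mk, stmt12dsmul_mk, stmt12dsmul_mk, ← stmt12mk_add]
      apply stmt12mk_eq
      show (s + t) * p.1 + (s * p.2 + t * p.2) = (s * p.1 + t * p.1) + (s + t) * p.2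
      simp only [add_mul]
  zero_smul m := by
    induction m using Quotient.inductionOn' with
    | h p =>
      show stmt12dsmul hcanc 0 (stmt12mk hcanc p) = 0
      rw [stmt12dsmul_mk, zero_mul, zero_mul]
      exact stmt12mk_zero hcanc

end Diff

/-- If `S` is an entire, cancellative, zerosumfree semiring, then the only injective
left `S`-semimodule is `{0}`; in particular any injective semimodule is divisible by
every non-zero-divisor. -/
theorem stmt_12 {S I : Type} [Semiring S] (hnt : (0 : S) ≠ 1)
    (hentire : ∀ a b : S, a * b = 0 → a = 0 ∨ b = 0)
    (hcanc : ∀ a b c : S, a + b = a + c → b = c)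
    (hzsf : ∀ a b : S, a + b = 0 → a = 0 ∧ b = 0)
    [AddCommMonoid I] [Module S I]
    (hinj : ∀ (L M : Type) [AddCommMonoid L] [AddCommMonoid M] [Module S L] [Module S M]
      (f : L →ₗ[S] M), Function.Injective f →
        ∀ g : L →ₗ[S] I, ∃ h : M →ₗ[S] I, ∀ l : L, h (f l) = g l) :
    (∀ x : I, x = 0) ∧
    (∀ s ∈ nonZeroDivisors S, ∀ x : I, ∃ y : I, s • y = x) := by
  -- Step 1: every element of `I` has an additive inverse,
  -- by extending `s ↦ s • a` along the embedding of `S` into its module of differences.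
  have hneg : ∀ a : I, ∃ w : I, a + w = 0 := by
    intro a
    letI : Module S (stmt12Diff hcanc) := stmt12DiffModule hcanc
    let f : S →ₗ[S] stmt12Diff hcanc :=
      { toFun := fun s => stmt12mk hcanc (s, 0)
        map_add' := fun s t => by
          rw [← stmt12mk_add]
          apply stmt12mk_eq
          show (s + t) + (0 + 0) = (s + t) + 0
          rw [add_zero]
        map_smul' := fun s t => by
          show stmt12mk hcanc (s * t, 0) = stmt12dsmul hcanc s (stmt12mk hcanc (t, 0))
          rw [stmt12dsmul_mk, mul_zero] }
    have hf : Function.Injective f := by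
      intro s t h
      have := (stmt12mk_eq_iff hcanc).mp h
      simpa using this
    let g : S →ₗ[S] I :=
      { toFun := fun s => s • a
        map_add' := fun s t => add_smul s t a
        map_smul' := fun s t => mul_smul s t a }
    obtain ⟨h, hh⟩ := hinj S (stmt12Diff hcanc) f hf g
    refine ⟨h (stmt12mk hcanc (0, 1)), ?_⟩
    have h1 : f 1 + stmt12mk hcanc (0, 1) = 0 := by
      show stmt12mk hcanc (1, 0) + stmt12mk hcanc (0, 1) = 0
      rw [← stmt12mk_add, ← stmt12mk_zero hcanc]
      apply stmt12mk_eq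
      show (1 + 0) + 0 = 0 + (0 + 1)
      simp
    have h2 : h (f 1) = a := by
      have := hh 1
      simpa [g] using this
    calc a + h (stmt12mk hcanc (0, 1)) = h (f 1) + h (stmt12mk hcanc (0, 1)) := by rw [h2]
      _ = h (f 1 + stmt12mk hcanc (0, 1)) := (map_add h _ _).symm
      _ = h 0 := by rw [h1]
      _ = 0 := map_zero h
  -- Step 2: extending the identity along `I ↪ WithTop I` gives an absorbing element.
  have key : ∀ x : I, x = 0 := by
    letI : Module S (WithTop I) := stmt12Module hnt hentire hzsf
    let f : I →ₗ[S] WithTop I :=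
      { toFun := fun x => (x : WithTop I)
        map_add' := fun x y => WithTop.coe_add x y
        map_smul' := fun s x => (stmt12tsmul_coe s x).symm }
    have hf : Function.Injective f := WithTop.coe_injective
    obtain ⟨h, hh⟩ := hinj I (WithTop I) f hf LinearMap.id
    intro x
    have habs : x + h ⊤ = h ⊤ := by
      calc x + h ⊤ = h (f x) + h ⊤ := by rw [hh x]; rfl
        _ = h ((x : WithTop I) + ⊤) := (map_add h _ _).symm
        _ = h ⊤ := by rw [WithTop.add_top]
    obtain ⟨w, hw⟩ := hneg (h ⊤)
    calc x = x + 0 := (add_zero x).symm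
      _ = x + (h ⊤ + w) := by rw [hw]
      _ = (x + h ⊤) + w := (add_assoc _ _ _).symm
      _ = h ⊤ + w := by rw [habs]
      _ = 0 := hw
  exact ⟨key, fun s _ x => ⟨0, by rw [smul_zero, key x]⟩⟩
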